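/- Suppose α* ∈ A satisfies h(α*) ≥ h(α) for all α ∈ A, suppose there is a relatively open neighborhood U of α* in A and a map x* : U → ℝ^d such that for each α ∈ U the point x*(α) minimizes f over {x : g(x, α) ≥ 0} and x* is differentiable at α* (within A), suppose g(x*(α*), α*) = 0, and suppose there exists a Lagrange multiplier λ < 0 with ∇f(x*(α*)) + λ∇ₓg(x*(α*), α*) = 0. Then for every v ∈ ℝ with α* + v ∈ A one has v · ∂_αg(x*(α*), α*) ≥ 0. -/

import Mathlib

open Set

set_option maxHeartbeats 1000000

/-- Active-constraint case: the directional derivative of `g` in `α` at the KKT point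
is nonnegative in every direction pointing into `A`. -/
theorem stmt_2
    (d : ℕ) (hd : 1 ≤ d)
    (A : Set ℝ) (hA : Convex ℝ A)
    (g : EuclideanSpace ℝ (Fin d) × ℝ → ℝ) (hg : ContDiff ℝ 1 g)
    (hgconv : ∀ x : EuclideanSpace ℝ (Fin d), ConvexOn ℝ A (fun α => g (x, α)))
    (f : EuclideanSpace ℝ (Fin d) → ℝ) (hf : ContDiff ℝ 1 f)
    (hfconv : ConvexOn ℝ Set.univ f)
    (hfmin : ∃! x₀ : EuclideanSpace ℝ (Fin d), ∀ x, f x₀ ≤ f x)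
    (h : ℝ → ℝ)
    (hdef : ∀ α ∈ A, IsGLB (f '' {x | 0 ≤ g (x, α)}) (h α))
    (αstar : ℝ) (hαstarA : αstar ∈ A)
    (hmax : ∀ α ∈ A, h α ≤ h αstar)
    (U : Set ℝ) (hUA : U ⊆ A) (hαstarU : αstar ∈ U)
    (hUopen : ∃ V : Set ℝ, IsOpen V ∧ U = V ∩ A)
    (xstar : ℝ → EuclideanSpace ℝ (Fin d))
    (hxstar : ∀ α ∈ U, 0 ≤ g (xstar α, α) ∧ ∀ y, 0 ≤ g (y, α) → f (xstar α) ≤ f y)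
    (hdiff : DifferentiableWithinAt ℝ xstar A αstar)
    (hactive : g (xstar αstar, αstar) = 0)
    (lam : ℝ) (hlam_neg : lam < 0)
    (hkkt : fderiv ℝ f (xstar αstar)
      + lam • fderiv ℝ (fun x => g (x, αstar)) (xstar αstar) = 0) :
    ∀ v : ℝ, αstar + v ∈ A →
      0 ≤ v * deriv (fun α => g (xstar αstar, α)) αstar := by
  intro v hv
  classical
  obtain ⟨V, hVopen, hUV⟩ := hUopen
  have hgd : Differentiable ℝ g := hg.differentiable one_ne_zero
  have hfd : Differentiable ℝ f := hf.differentiable one_ne_zero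
  set Dg := fderiv ℝ g (xstar αstar, αstar) with hDgdef
  -- partial derivatives of g
  have hGx : HasFDerivAt (fun x => g (x, αstar))
      (Dg.comp (ContinuousLinearMap.inl ℝ (EuclideanSpace ℝ (Fin d)) ℝ)) (xstar αstar) :=
    (hgd (xstar αstar, αstar)).hasFDerivAt.comp (xstar αstar)
      (hasFDerivAt_prodMk_left (xstar αstar) αstar)
  have hGα : HasDerivAt (fun α => g (xstar αstar, α)) (Dg (0, 1)) αstar := by
    have h1 : HasFDerivAt (fun α : ℝ => g (xstar αstar, α))
        (Dg.comp (ContinuousLinearMap.inr ℝ (EuclideanSpace ℝ (Fin d)) ℝ)) αstar :=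
      (hgd (xstar αstar, αstar)).hasFDerivAt.comp αstar
        (hasFDerivAt_prodMk_right (xstar αstar) αstar)
    simpa using h1.hasDerivAt
  -- v is in the positive tangent cone of A at αstar
  have hvcone : v ∈ posTangentConeAt A αstar :=
    mem_posTangentConeAt_of_segment_subset (hA.segment_subset hαstarA hv)
  -- U is a neighborhood of αstar within A
  have hUnhds : U ∈ nhdsWithin αstar A := by
    rw [mem_nhdsWithin]
    refine ⟨V, hVopen, ?_, by rw [hUV]⟩
    have := hαstarU; rw [hUV] at this; exact this.1
  -- h α = f (xstar α) on U
  have key : ∀ α ∈ U, f (xstar α) = h α := by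
    intro α hα
    obtain ⟨hfeas, hmin⟩ := hxstar α hα
    have hglb := hdef α (hUA hα)
    refine le_antisymm (hglb.2 ?_) (hglb.1 ⟨xstar α, hfeas, rfl⟩)
    rintro y ⟨x, hx, rfl⟩
    exact hmin x hx
  -- derivatives within A
  set L := fderivWithin ℝ xstar A αstar with hLdef
  have hL : HasFDerivWithinAt xstar L A αstar := hdiff.hasFDerivWithinAt
  have hF : HasFDerivWithinAt (fun α => (xstar α, α))
      (L.prod (ContinuousLinearMap.id ℝ ℝ)) A αstar :=
    HasFDerivWithinAt.prodMk hL (hasFDerivWithinAt_id αstar A)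
  have hφ : HasFDerivWithinAt (fun α => g (xstar α, α))
      (Dg.comp (L.prod (ContinuousLinearMap.id ℝ ℝ))) A αstar :=
    HasFDerivAt.comp_hasFDerivWithinAt (g := g) (f := fun α => (xstar α, α)) αstar
      (hgd (xstar αstar, αstar)).hasFDerivAt hF
  have hψ : HasFDerivWithinAt (fun α => f (xstar α))
      ((fderiv ℝ f (xstar αstar)).comp L) A αstar :=
    HasFDerivAt.comp_hasFDerivWithinAt (g := f) (f := xstar) αstar
      (hfd (xstar αstar)).hasFDerivAt hL
  -- local min of φ
  have hminOn : IsLocalMinOn (fun α => g (xstar α, α)) A αstar := by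
    have : ∀ᶠ α in nhdsWithin αstar A, g (xstar αstar, αstar) ≤ g (xstar α, α) := by
      filter_upwards [hUnhds] with α hα
      rw [hactive]
      exact (hxstar α hα).1
    exact this
  -- local max of ψ
  have hmaxOn : IsLocalMaxOn (fun α => f (xstar α)) A αstar := by
    have : ∀ᶠ α in nhdsWithin αstar A, f (xstar α) ≤ f (xstar αstar) := by
      filter_upwards [hUnhds] with α hα
      rw [key α hα, key αstar hαstarU]
      exact hmax α (hUA hα)
    exact this
  have h1 : 0 ≤ Dg (L v, v) := by
    have := hminOn.hasFDerivWithinAt_nonneg hφ hvcone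
    simpa using this
  have h2 : (fderiv ℝ f (xstar αstar)) (L v) ≤ 0 := by
    have := hmaxOn.hasFDerivWithinAt_nonpos hψ hvcone
    simpa using this
  -- KKT: fderiv f = -lam • Gx
  set Gx := fderiv ℝ (fun x => g (x, αstar)) (xstar αstar) with hGxdef
  have hkkt' : (fderiv ℝ f (xstar αstar)) (L v) + lam * Gx (L v) = 0 := by
    have := congrArg (fun T : EuclideanSpace ℝ (Fin d) →L[ℝ] ℝ => T (L v)) hkkt
    simpa using this
  have h3 : Gx (L v) ≤ 0 := by
    nlinarith [hkkt', h2, hlam_neg]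
  have hGxeq : Gx (L v) = Dg (L v, 0) := by
    rw [hGxdef, hGx.fderiv]
    rfl
  have hsplit : Dg (L v, v) = Gx (L v) + v * Dg (0, 1) := by
    rw [hGxeq]
    have : (L v, v) = (L v, (0:ℝ)) + ((0 : EuclideanSpace ℝ (Fin d)), v) := by simp
    rw [this, map_add]
    congr 1
    have : ((0 : EuclideanSpace ℝ (Fin d)), v) = v • ((0 : EuclideanSpace ℝ (Fin d)), (1:ℝ)) := by
      simp
    rw [this, map_smul]
    simp [mul_comm]
  rw [hGα.deriv]
  nlinarith [h1, h3, hsplit]
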